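/- In the billiard inside the convex table K_λ bounded by the level curve {φ = L + 2λ}, suppose a trajectory segment is tangent to H and hits ∂K_λ at a point q. Then the reflected segment is also tangent to H (at the tangent point of the other supporting line through q). Consequently: a chord hitting ∂K_λ at q that crosses the interior of H reflects to a chord that again crosses H, and a chord that misses H reflects to a chord that misses H. -/

import Mathlib

open scoped RealInnerProductSpace ENNReal
open Set Metric Real MeasureTheory Filter

noncomputable section

/-- The Euclidean plane. -/
abbrev E2 : Type := EuclideanSpace ℝ (Fin 2)

/-- The unit vector with angle `θ` to the positive x-axis. -/
def dir (θ : ℝ) : E2 := WithLp.toLp 2 ![Real.cos θ, Real.sin θ]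

/-- Anticlockwise rotation by a right angle. -/
def rot (v : E2) : E2 := WithLp.toLp 2 ![-(v 1), v 0]

/-- `h` is an arc-length parameterisation of the boundary of `H`, a closed
rectifiable curve of length `L`. -/
def IsArcLengthParam (h : ℝ → E2) (L : ℝ) (H : Set E2) : Prop :=
  h '' (Set.Icc 0 L) = frontier H ∧ Set.InjOn h (Set.Ico 0 L) ∧ h 0 = h L ∧
    ∀ s t : ℝ, 0 ≤ s → s ≤ t → t ≤ L →
      eVariationOn h (Set.Icc s t) = ENNReal.ofReal (t - s)

/-- Billiard reflection of `v` in the unit normal `ν`. -/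
def reflect (ν v : E2) : E2 := v - (2 * ⟪v, ν⟫) • ν

lemma inner2 (u v : E2) : ⟪u, v⟫ = u 0 * v 0 + u 1 * v 1 := by
  simp [PiLp.inner_apply, Fin.sum_univ_two, mul_comm]

@[simp] lemma rot0 (v : E2) : rot v 0 = -(v 1) := rfl
@[simp] lemma rot1 (v : E2) : rot v 1 = v 0 := rfl
@[simp] lemma dir0 (θ : ℝ) : dir θ 0 = Real.cos θ := rfl
@[simp] lemma dir1 (θ : ℝ) : dir θ 1 = Real.sin θ := rfl

lemma rot_inner_comm (u v : E2) : ⟪rot u, v⟫ = -⟪rot v, u⟫ := by simp [inner2]; ring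

lemma rot_inner_self (u : E2) : ⟪rot u, u⟫ = 0 := by simp [inner2]; ring

lemma span2 (u z : E2) (hu : u ≠ 0) (h : ⟪rot u, z⟫ = 0) : z = (⟪z, u⟫ / ⟪u, u⟫) • u := by
  have hn : ⟪u, u⟫ ≠ 0 := (inner_self_ne_zero (𝕜 := ℝ)).mpr hu
  rw [inner2] at h hn
  simp only [rot0, rot1] at h
  ext i
  fin_cases i <;>
    simp only [inner2, PiLp.smul_apply, smul_eq_mul, Fin.isValue, Fin.zero_eta, Fin.mk_one]
  · rw [div_mul_eq_mul_div, eq_div_iff hn]; linear_combination (-(u 1)) * h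
  · rw [div_mul_eq_mul_div, eq_div_iff hn]; linear_combination (u 0) * h

lemma key_scalar (p0 p1 m0 m1 w0 w1 : ℝ) (hp : p0^2 + p1^2 = 1) (hm : m0^2 + m1^2 = 1) :
    2*(p0*m1 - p1*m0)*((m0-p0)*w0 + (m1-p1)*w1)
      = (2 - 2*(p0*m0 + p1*m1)) * ((-p1*w0 + p0*w1) + (-m1*w0 + m0*w1)) := by
  linear_combination (-2*p1*w0 + 2*p0*w1) * hm + (-2*m1*w0 + 2*m0*w1) * hp

lemma keyT (a b ν w : E2) (c : ℝ) (hc0 : c ≠ 0)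
    (ha2 : a 0 ^ 2 + a 1 ^ 2 = 1) (hb2 : b 0 ^ 2 + b 1 ^ 2 = 1)
    (hce : c^2 = 2 - 2*(a 0 * b 0 + a 1 * b 1))
    (hν : ν = c⁻¹ • (b - a)) :
    ⟪rot a, (2 * ⟪w, ν⟫) • ν - w⟫ = ⟪rot b, w⟫ := by
  have expand : ⟪rot a, (2 * ⟪w, c⁻¹ • (b-a)⟫) • (c⁻¹ • (b-a)) - w⟫
      = 2 * c⁻¹ * c⁻¹ * ⟪w, b-a⟫ * ⟪rot a, b-a⟫ - ⟪rot a, w⟫ := by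
    rw [inner_sub_right, real_inner_smul_right, real_inner_smul_right, real_inner_smul_right]
    ring
  rw [hν, expand]
  have hmain : 2 * ⟪w, b - a⟫ * ⟪rot a, b - a⟫ = c^2 * (⟪rot a, w⟫ + ⟪rot b, w⟫) := by
    rw [hce]
    simp only [inner2, PiLp.sub_apply, rot0, rot1]
    linear_combination key_scalar (a 0) (a 1) (b 0) (b 1) (w 0) (w 1) ha2 hb2
  have hc2 : c⁻¹ * c⁻¹ * c^2 = 1 := by field_simp
  have h2 : 2 * c⁻¹ * c⁻¹ * ⟪w, b-a⟫ * ⟪rot a, b-a⟫ = ⟪rot a, w⟫ + ⟪rot b, w⟫ := by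
    calc 2 * c⁻¹ * c⁻¹ * ⟪w, b-a⟫ * ⟪rot a, b-a⟫
        = c⁻¹ * c⁻¹ * (2 * ⟪w, b-a⟫ * ⟪rot a, b-a⟫) := by ring
      _ = c⁻¹ * c⁻¹ * (c^2 * (⟪rot a, w⟫ + ⟪rot b, w⟫)) := by rw [hmain]
      _ = (c⁻¹ * c⁻¹ * c^2) * (⟪rot a, w⟫ + ⟪rot b, w⟫) := by ring
      _ = ⟪rot a, w⟫ + ⟪rot b, w⟫ := by rw [hc2, one_mul]
  rw [h2]; ring

lemma ivt_scalar (fx fp : ℝ) (h : (fp < 0 ∧ 0 ≤ fx) ∨ (0 < fp ∧ fx < 0)) :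
    ∃ t : ℝ, 0 ≤ t ∧ t < 1 ∧ (1-t) * fx + t * fp = 0 := by
  rcases h with ⟨h1, h2⟩ | ⟨h1, h2⟩
  · have hden : 0 < fx - fp := by linarith
    exact ⟨fx / (fx - fp), div_nonneg h2 hden.le, (div_lt_one hden).mpr (by linarith),
      by field_simp; ring⟩
  · have hden : fx - fp < 0 := by linarith
    refine ⟨fx / (fx - fp), (div_pos_iff.mpr (Or.inr ⟨h2, hden⟩)).le, ?_, by
      field_simp [hden.ne]; ring⟩
    have h3 := div_neg_of_pos_of_neg h1 hden
    have h4 : fx / (fx - fp) - 1 = fp / (fx - fp) := by field_simp [hden.ne]; ring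
    linarith [h4 ▸ h3]

lemma core (H S : Set E2) (q pp pm a b u x : E2) (rp rm : ℝ)
    (hrp : 0 < rp) (hrm : 0 < rm)
    (hppq : pp = q - rp • a) (hpmq : pm = q + rm • b)
    (hppH : pp ∈ H) (hpmH : pm ∈ H) (hqH : q ∉ H)
    (hsa : ∀ y ∈ H, 0 ≤ ⟪rot a, y - q⟫)
    (hsub : S ⊆ H)
    (hcombo : ∀ x' ∈ S, ∀ p ∈ H, ∀ t : ℝ, 0 ≤ t → t < 1 → (1-t) • x' + t • p ∈ S)
    (hx : x ∈ S) (hu : u ≠ 0)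
    (hA : 0 < ⟪rot a, u⟫) (hB : 0 < ⟪rot b, u⟫) :
    ∃ t : ℝ, 0 < t ∧ q + t • u ∈ S := by
  have hfpp : ⟪rot u, pp - q⟫ = rp * ⟪rot a, u⟫ := by
    rw [hppq]
    have h1 : q - rp • a - q = (-rp) • a := by module
    rw [h1, real_inner_smul_right, rot_inner_comm u a]; ring
  have hfpm : ⟪rot u, pm - q⟫ = -(rm * ⟪rot b, u⟫) := by
    rw [hpmq]
    have h1 : q + rm • b - q = rm • b := by module
    rw [h1, real_inner_smul_right, rot_inner_comm u b]; ring
  have hfppos : 0 < ⟪rot u, pp - q⟫ := by rw [hfpp]; exact mul_pos hrp hA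
  have hfpmneg : ⟪rot u, pm - q⟫ < 0 := by rw [hfpm]; nlinarith [mul_pos hrm hB]
  obtain ⟨z, hzS, hfz⟩ : ∃ z ∈ S, ⟪rot u, z - q⟫ = 0 := by
    by_cases hfx : 0 ≤ ⟪rot u, x - q⟫
    · obtain ⟨t, ht0, ht1, hteq⟩ := ivt_scalar ⟪rot u, x - q⟫ ⟪rot u, pm - q⟫
        (Or.inl ⟨hfpmneg, hfx⟩)
      refine ⟨(1-t) • x + t • pm, hcombo x hx pm hpmH t ht0 ht1, ?_⟩
      have hz : ((1-t) • x + t • pm) - q = (1-t) • (x - q) + t • (pm - q) := by module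
      rw [hz, inner_add_right, real_inner_smul_right, real_inner_smul_right, hteq]
    · push_neg at hfx
      obtain ⟨t, ht0, ht1, hteq⟩ := ivt_scalar ⟪rot u, x - q⟫ ⟪rot u, pp - q⟫
        (Or.inr ⟨hfppos, hfx⟩)
      refine ⟨(1-t) • x + t • pp, hcombo x hx pp hppH t ht0 ht1, ?_⟩
      have hz : ((1-t) • x + t • pp) - q = (1-t) • (x - q) + t • (pp - q) := by module
      rw [hz, inner_add_right, real_inner_smul_right, real_inner_smul_right, hteq]
  have hzspan := span2 u (z - q) hu hfz
  have hza : 0 ≤ ⟪rot a, z - q⟫ := hsa z (hsub hzS)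
  rw [hzspan, real_inner_smul_right] at hza
  have hlam0 : 0 ≤ ⟪z - q, u⟫ / ⟪u, u⟫ := by
    by_contra hneg
    push_neg at hneg
    nlinarith [mul_neg_of_neg_of_pos hneg hA]
  have hlamne : ⟪z - q, u⟫ / ⟪u, u⟫ ≠ 0 := by
    intro h0
    rw [h0, zero_smul, sub_eq_zero] at hzspan
    exact hqH (hzspan ▸ hsub hzS)
  refine ⟨_, lt_of_le_of_ne hlam0 (Ne.symm hlamne), ?_⟩
  have hzq : q + (⟪z - q, u⟫ / ⟪u, u⟫) • u = z := by rw [← hzspan]; abel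
  rw [hzq]; exact hzS

def Tmap (ν w : E2) : E2 := (2 * ⟪w, ν⟫) • ν - w

lemma Tmap_inner_nu (ν w : E2) (hνν : ⟪ν, ν⟫ = 1) : ⟪Tmap ν w, ν⟫ = ⟪w, ν⟫ := by
  simp only [Tmap, inner_sub_left, real_inner_smul_left, hνν]
  ring

lemma Tmap_smul (ν : E2) (r : ℝ) (w : E2) : Tmap ν (r • w) = r • Tmap ν w := by
  simp only [Tmap, real_inner_smul_left]
  module

lemma Tmap_ray (ν : E2) (s : ℝ) (v : E2) : Tmap ν (-(s • v)) = s • reflect ν v := by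
  simp only [Tmap, reflect, inner_neg_left, real_inner_smul_left]
  module

lemma reflect_eq_neg_Tmap (ν v : E2) : reflect ν v = -(Tmap ν v) := by
  simp only [Tmap, reflect]
  module

lemma reflect_inner_nu (ν v : E2) (hνν : ⟪ν, ν⟫ = 1) : ⟪reflect ν v, ν⟫ = -⟪v, ν⟫ := by
  simp only [reflect, inner_sub_left, real_inner_smul_left, hνν]
  ring

lemma reflect_reflect (ν v : E2) (hνν : ⟪ν, ν⟫ = 1) : reflect ν (reflect ν v) = v := by
  have h1 : reflect ν (reflect ν v) = reflect ν v - (2 * ⟪reflect ν v, ν⟫) • ν := rfl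
  rw [h1, reflect_inner_nu ν v hνν]
  simp only [reflect]
  module



set_option maxHeartbeats 2000000 in

/-- Tangency is preserved by reflection on the boundary of the table `K_λ`: at a
boundary point `q`, whose normal bisects the two supporting lines of `H` through
`q`, a trajectory arriving along the anticlockwise supporting ray (tangent to `H`)
reflects into the clockwise supporting line (again tangent to `H`); consequently an
incoming chord crossing the interior of `H` reflects to a chord again crossing `H`,
and an incoming chord missing `H` reflects to a chord missing `H`. -/
theorem reflection_preserves_tangency_and_splits (H : Set E2)
    (hconv : Convex ℝ H) (hcomp : IsCompact H) (hint : (interior H).Nonempty)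
    (L : ℝ) (hL : 0 < L) (h : ℝ → E2) (hparam : IsArcLengthParam h L H)
    (q : E2) (hq : q ∉ H) (θpv θmv tpv tmv : ℝ)
    (htpv : tpv ∈ Set.Ico 0 L) (htmv : tmv ∈ Set.Ico 0 L)
    -- `q` lies on the anticlockwise supporting ray touching `∂H` at `h tpv`
    (hrayp : ∃ r : ℝ, 0 < r ∧ q = h tpv + r • dir θpv)
    -- `q` lies behind the clockwise supporting ray touching `∂H` at `h tmv`
    (hraym : ∃ r : ℝ, 0 < r ∧ q = h tmv - r • dir θmv)
    (hsupp : ∀ x ∈ H, 0 ≤ ⟪rot (dir θpv), x - h tpv⟫)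
    (hsupm : ∀ x ∈ H, 0 ≤ ⟪rot (dir θmv), x - h tmv⟫)
    (hne : dir θpv ≠ dir θmv)
    -- the (inward) unit normal at `q` bisects the two supporting lines
    (ν : E2) (hν : ν = ‖dir θmv - dir θpv‖⁻¹ • (dir θmv - dir θpv)) :
    -- a segment tangent to `H` reflects to a segment tangent to `H`
    reflect ν (dir θpv) = dir θmv ∧
    -- chords through the interior of `H` reflect to chords through `H`, and
    -- chords missing `H` reflect to chords missing `H`
    (∀ v : E2, ‖v‖ = 1 → ⟪v, ν⟫ < 0 →
      ((∃ s : ℝ, 0 < s ∧ q - s • v ∈ interior H) →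
        ∃ s : ℝ, 0 < s ∧ q + s • reflect ν v ∈ interior H) ∧
      ((∀ s : ℝ, 0 < s → q - s • v ∉ H) →
        ∀ s : ℝ, 0 < s → q + s • reflect ν v ∉ H)) := by
  obtain ⟨rp, hrp, hqp⟩ := hrayp
  obtain ⟨rm, hrm, hqm⟩ := hraym
  set a : E2 := dir θpv with ha_def
  set b : E2 := dir θmv with hb_def
  set pp : E2 := h tpv with hpp_def
  set pm : E2 := h tmv with hpm_def
  -- unit vector facts
  have ha2 : a 0 ^ 2 + a 1 ^ 2 = 1 := by
    simp only [ha_def, dir0, dir1]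
    exact Real.cos_sq_add_sin_sq θpv
  have hb2 : b 0 ^ 2 + b 1 ^ 2 = 1 := by
    simp only [hb_def, dir0, dir1]
    exact Real.cos_sq_add_sin_sq θmv
  have haa : ⟪a, a⟫ = 1 := by rw [inner2]; linear_combination ha2
  have hbb : ⟪b, b⟫ = 1 := by rw [inner2]; linear_combination hb2
  have ha0 : a ≠ 0 := fun h0 => by rw [h0, inner_zero_left] at haa; norm_num at haa
  have hb0 : b ≠ 0 := fun h0 => by rw [h0, inner_zero_left] at hbb; norm_num at hbb
  have hd0 : b - a ≠ 0 := sub_ne_zero.mpr (Ne.symm hne)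
  set c : ℝ := ‖b - a‖ with hc_def
  have hc0 : (0:ℝ) < c := norm_pos_iff.mpr hd0
  have hcc : ⟪b - a, b - a⟫ = c^2 := real_inner_self_eq_norm_sq (b - a)
  have he : ⟪a, b⟫ = a 0 * b 0 + a 1 * b 1 := inner2 a b
  have hce : c^2 = 2 - 2*(a 0 * b 0 + a 1 * b 1) := by
    rw [← hcc]
    simp only [inner2, PiLp.sub_apply]
    linear_combination ha2 + hb2
  have hν' : ν = c⁻¹ • (b - a) := hν
  have hνν : ⟪ν, ν⟫ = 1 := by
    rw [hν', real_inner_smul_left, real_inner_smul_right, hcc]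
    field_simp
  have he1 : a 0 * b 0 + a 1 * b 1 < 1 := by nlinarith [pow_pos hc0 2]
  have haν : ⟪a, ν⟫ = c⁻¹ * ((a 0 * b 0 + a 1 * b 1) - 1) := by
    rw [hν', real_inner_smul_right, inner_sub_right, haa, he]
  have hbν : ⟪b, ν⟫ = c⁻¹ * (1 - (a 0 * b 0 + a 1 * b 1)) := by
    have hba : ⟪b, a⟫ = a 0 * b 0 + a 1 * b 1 := by rw [inner2]; ring
    rw [hν', real_inner_smul_right, inner_sub_right, hbb, hba]
  have haν_neg : ⟪a, ν⟫ < 0 := by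
    rw [haν]
    exact mul_neg_of_pos_of_neg (inv_pos.mpr hc0) (by linarith)
  have hbν_pos : 0 < ⟪b, ν⟫ := by
    rw [hbν]
    exact mul_pos (inv_pos.mpr hc0) (by linarith)
  -- part 1
  have hrefl_a : reflect ν a = b := by
    have hsc : 2 * ⟪a, ν⟫ = -c := by
      rw [haν]
      field_simp
      linarith [hce]
    show a - (2 * ⟪a, ν⟫) • ν = b
    rw [hsc, hν', smul_smul]
    have : -c * c⁻¹ = -1 := by field_simp
    rw [this]
    module
  have hrefl_b : reflect ν b = a := by
    have hsc : 2 * ⟪b, ν⟫ = c := by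
      rw [hbν]
      field_simp
      linarith [hce]
    show b - (2 * ⟪b, ν⟫) • ν = a
    rw [hsc, hν', smul_smul]
    have : c * c⁻¹ = 1 := by field_simp
    rw [this]
    module
  have hTA : ∀ w : E2, ⟪rot a, Tmap ν w⟫ = ⟪rot b, w⟫ := fun w =>
    keyT a b ν w c hc0.ne' ha2 hb2 hce hν'
  have hTB : ∀ w : E2, ⟪rot b, Tmap ν w⟫ = ⟪rot a, w⟫ := by
    intro w
    have hν2 : -ν = c⁻¹ • (a - b) := by rw [hν']; module
    have hce2 : c^2 = 2 - 2*(b 0 * a 0 + b 1 * a 1) := by rw [hce]; ring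
    have hkey := keyT b a (-ν) w c hc0.ne' hb2 ha2 hce2 hν2
    have hsm : (2 * ⟪w, -ν⟫) • (-ν) - w = Tmap ν w := by
      rw [inner_neg_right]
      simp only [Tmap]
      module
    rw [hsm] at hkey
    exact hkey
  have hTm_a : Tmap ν a = -b := by
    have h1 := reflect_eq_neg_Tmap ν a
    rw [hrefl_a] at h1
    rw [← neg_neg (Tmap ν a), ← h1]
  have hTm_b : Tmap ν b = -a := by
    have h1 := reflect_eq_neg_Tmap ν b
    rw [hrefl_b] at h1
    rw [← neg_neg (Tmap ν b), ← h1]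
  -- membership of tangent points
  have hHcl : IsClosed H := hcomp.isClosed
  have hppq : pp = q - rp • a := by rw [hqp]; module
  have hpmq : pm = q + rm • b := by rw [hqm]; module
  have hppH : pp ∈ H := by
    apply hHcl.frontier_subset
    rw [← hparam.1]
    exact ⟨tpv, ⟨htpv.1, htpv.2.le⟩, rfl⟩
  have hpmH : pm ∈ H := by
    apply hHcl.frontier_subset
    rw [← hparam.1]
    exact ⟨tmv, ⟨htmv.1, htmv.2.le⟩, rfl⟩
  -- support inequalities at q
  have hsa : ∀ y ∈ H, 0 ≤ ⟪rot a, y - q⟫ := by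
    intro y hy
    have h1 := hsupp y hy
    have hyq : y - q = (y - pp) + (-rp) • a := by rw [hppq]; module
    rw [hyq, inner_add_right, real_inner_smul_right, rot_inner_self]
    simpa using h1
  have hsb : ∀ y ∈ H, 0 ≤ ⟪rot b, y - q⟫ := by
    intro y hy
    have h1 := hsupm y hy
    have hyq : y - q = (y - pm) + rm • b := by rw [hpmq]; module
    rw [hyq, inner_add_right, real_inner_smul_right, rot_inner_self]
    simpa using h1
  -- strict support inequalities for interior points
  have hstrict : ∀ (d : E2), ⟪d, d⟫ = 1 → (∀ y ∈ H, 0 ≤ ⟪d, y - q⟫) →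
      ∀ x ∈ interior H, 0 < ⟪d, x - q⟫ := by
    intro d hd hsup x hx
    obtain ⟨ε, hε, hball⟩ := Metric.isOpen_iff.mp isOpen_interior x hx
    have hnd : ‖d‖ = 1 := by
      have h1 : ‖d‖^2 = 1 := by rw [← real_inner_self_eq_norm_sq]; exact hd
      nlinarith [norm_nonneg d]
    have hx' : x - (ε/2) • d ∈ H := by
      apply interior_subset
      apply hball
      rw [mem_ball, dist_eq_norm]
      have h2 : x - (ε/2) • d - x = -((ε/2) • d) := by module
      rw [h2, norm_neg, norm_smul, hnd, mul_one, Real.norm_eq_abs, abs_of_pos (by linarith)]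
      linarith
    have h1 := hsup _ hx'
    have heq : x - (ε/2) • d - q = (x - q) + (-(ε/2)) • d := by module
    rw [heq, inner_add_right, real_inner_smul_right, hd] at h1
    linarith
  have hrotaa : ⟪rot a, rot a⟫ = 1 := by
    rw [inner2]; simp only [rot0, rot1]; linear_combination ha2
  have hrotbb : ⟪rot b, rot b⟫ = 1 := by
    rw [inner2]; simp only [rot0, rot1]; linear_combination hb2
  refine ⟨hrefl_a, ?_⟩
  intro v hv hvν
  constructor
  · -- crossing chords reflect to crossing chords
    rintro ⟨s, hs, hxint⟩
    set x : E2 := q - s • v with hx_def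
    have hxq : x - q = -(s • v) := by rw [hx_def]; module
    have hA' : 0 < ⟪rot a, x - q⟫ := hstrict (rot a) hrotaa hsa x hxint
    have hB' : 0 < ⟪rot b, x - q⟫ := hstrict (rot b) hrotbb hsb x hxint
    set u : E2 := s • reflect ν v with hu_def
    have hu_eq : u = Tmap ν (x - q) := by rw [hxq, Tmap_ray]
    have huν : 0 < ⟪u, ν⟫ := by
      rw [hu_eq, Tmap_inner_nu ν _ hνν, hxq, inner_neg_left, real_inner_smul_left]
      nlinarith
    have hu0 : u ≠ 0 := by
      intro h0
      rw [h0, inner_zero_left] at huν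
      exact lt_irrefl 0 huν
    have hcombo : ∀ x' ∈ interior H, ∀ p ∈ H, ∀ t : ℝ, 0 ≤ t → t < 1 →
        (1-t) • x' + t • p ∈ interior H := by
      intro x' hx' p hp t ht0 ht1
      exact hconv.combo_interior_closure_mem_interior hx' (subset_closure hp)
        (by linarith) ht0 (by ring)
    obtain ⟨t, ht, htm⟩ := core H (interior H) q pp pm a b u x rp rm hrp hrm hppq hpmq
      hppH hpmH hq hsa interior_subset hcombo hxint hu0
      (by rw [hu_eq, hTA]; exact hB') (by rw [hu_eq, hTB]; exact hA')
    refine ⟨t * s, mul_pos ht hs, ?_⟩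
    have hts : (t * s) • reflect ν v = t • u := by rw [hu_def, smul_smul]
    rw [hts]
    exact htm
  · -- missing chords reflect to missing chords
    intro hmiss s hs hyH
    set y : E2 := q + s • reflect ν v with hy_def
    have hyq : y - q = s • reflect ν v := by rw [hy_def]; module
    have hwν : 0 < ⟪y - q, ν⟫ := by
      rw [hyq, real_inner_smul_left, reflect_inner_nu ν v hνν]
      nlinarith
    have hTmyq : Tmap ν (y - q) = -(s • v) := by
      have h1 : y - q = -(s • (-(reflect ν v))) := by rw [hyq]; module
      rw [h1, Tmap_ray]
      have h2 : reflect ν (-(reflect ν v)) = -(reflect ν (reflect ν v)) := by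
        simp only [reflect, inner_neg_left]
        module
      rw [h2, reflect_reflect ν v hνν]
      module
    have hA' : 0 ≤ ⟪rot a, y - q⟫ := hsa y hyH
    have hB' : 0 ≤ ⟪rot b, y - q⟫ := hsb y hyH
    rcases hA'.eq_or_lt with hA0 | hApos
    · -- y - q is parallel to a; the reflected trajectory passes through pm
      have hspan := span2 a (y - q) ha0 hA0.symm
      set α : ℝ := ⟪y - q, a⟫ / ⟪a, a⟫ with hα_def
      have hαneg : α < 0 := by
        have h1 : ⟪y - q, ν⟫ = α * ⟪a, ν⟫ := by
          rw [hspan, real_inner_smul_left]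
        by_contra hge
        push_neg at hge
        nlinarith [mul_nonneg hge (neg_nonneg.mpr haν_neg.le)]
      have hsv : s • v = α • b := by
        have h1 : Tmap ν (y - q) = α • Tmap ν a := by rw [hspan, Tmap_smul]
        rw [hTmyq, hTm_a] at h1
        have h2 : -(s • v) = -(α • b) := by rw [h1]; module
        exact neg_injective h2
      have hαpos : 0 < -α := neg_pos.mpr hαneg
      refine hmiss (s * (rm / (-α))) (mul_pos hs (div_pos hrm hαpos)) ?_
      have hcoef : (s * (rm / (-α))) • v = (-rm) • b := by
        have h1 : (s * (rm / (-α))) • v = (rm / (-α)) • (s • v) := by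
          rw [smul_smul]
          congr 1
          ring
        rw [h1, hsv, smul_smul]
        congr 1
        field_simp
        rw [div_self hαneg.ne]
      have h3 : q - (-rm) • b = pm := by rw [hpmq]; module
      rw [hcoef, h3]
      exact hpmH
    · rcases hB'.eq_or_lt with hB0 | hBpos
      · -- y - q is parallel to b; the reflected trajectory passes through pp
        have hspan := span2 b (y - q) hb0 hB0.symm
        set β : ℝ := ⟪y - q, b⟫ / ⟪b, b⟫ with hβ_def
        have hβpos : 0 < β := by
          have h1 : ⟪y - q, ν⟫ = β * ⟪b, ν⟫ := by
            rw [hspan, real_inner_smul_left]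
          by_contra hge
          push_neg at hge
          nlinarith [mul_nonpos_of_nonpos_of_nonneg hge hbν_pos.le]
        have hsv : s • v = β • a := by
          have h1 : Tmap ν (y - q) = β • Tmap ν b := by rw [hspan, Tmap_smul]
          rw [hTmyq, hTm_b] at h1
          have h2 : -(s • v) = -(β • a) := by rw [h1]; module
          exact neg_injective h2
        refine hmiss (s * (rp / β)) (mul_pos hs (div_pos hrp hβpos)) ?_
        have hcoef : (s * (rp / β)) • v = rp • a := by
          have h1 : (s * (rp / β)) • v = (rp / β) • (s • v) := by
            rw [smul_smul]
            congr 1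
            ring
          rw [h1, hsv, smul_smul]
          congr 1
          field_simp
        have h3 : q - rp • a = pp := hppq.symm
        rw [hcoef, h3]
        exact hppH
      · -- generic case: apply the crossing lemma inside H
        have hcombo : ∀ x' ∈ H, ∀ p ∈ H, ∀ t : ℝ, 0 ≤ t → t < 1 →
            (1-t) • x' + t • p ∈ H := by
          intro x' hx' p hp t ht0 ht1
          exact hconv hx' hp (by linarith) ht0 (by ring)
        have hu0 : Tmap ν (y - q) ≠ 0 := by
          intro h0
          have h1 := Tmap_inner_nu ν (y - q) hνν
          rw [h0, inner_zero_left] at h1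
          rw [← h1] at hwν
          exact lt_irrefl 0 hwν
        obtain ⟨t, ht, htm⟩ := core H H q pp pm a b (Tmap ν (y - q)) y rp rm hrp hrm
          hppq hpmq hppH hpmH hq hsa (subset_refl H) hcombo hyH hu0
          (by rw [hTA]; exact hBpos) (by rw [hTB]; exact hApos)
        rw [hTmyq] at htm
        refine hmiss (t * s) (mul_pos ht hs) ?_
        have h4 : q - (t * s) • v = q + t • (-(s • v)) := by
          rw [smul_neg, smul_smul]
          module
        rw [h4]
        exact htm


end
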